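/- For every integer p ≥ 1, the polynomials U_{2p}(y) and y·T_{2p+1}(y) are coprime in ℚ[y] (equivalently ℂ[y]). -/

import Mathlib

open Polynomial Polynomial.Chebyshev

/-- The quadratic invariant of the Chebyshev `U` recurrence. -/
lemma chebyshev_U_invariant (n : ℤ) :
    U ℚ (n + 1) ^ 2 - 2 * X * (U ℚ (n + 1) * U ℚ n) + U ℚ n ^ 2 = 1 := by
  induction n using Int.induction_on with
  | zero => simp [U_one]; ring
  | succ k ih =>
    have hU := U_add_two ℚ k
    linear_combination (norm := ring_nf) (U ℚ (k + 2) - U ℚ k) * hU + ih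
  | pred k ih =>
    have hU := U_add_two ℚ (-k - 1)
    have e : (-(k:ℤ) - 1 + 2) = -k + 1 := by ring
    rw [e] at hU
    have e2 : (-(k:ℤ) - 1 + 1) = -k := by ring
    rw [e2]
    linear_combination (norm := ring_nf) ih - (U ℚ (-k + 1) - U ℚ (-k - 1)) * hU

/-- Pell identity for Chebyshev polynomials. -/
lemma chebyshev_pell (n : ℤ) :
    T ℚ (n + 1) ^ 2 + (1 - X ^ 2) * U ℚ n ^ 2 = 1 := by
  have hT := T_eq_U_sub_X_mul_U ℚ (n + 1)
  have e : ((n:ℤ) + 1 - 1) = n := by ring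
  rw [e] at hT
  linear_combination (norm := ring_nf)
    chebyshev_U_invariant n + (T ℚ (n + 1) + U ℚ (n + 1) - X * U ℚ n) * hT

/-- Evaluation of even-index Chebyshev `U` at zero. -/
lemma chebyshev_U_even_eval_zero (n : ℤ) :
    (U ℚ (2 * n)).eval 0 = (-1 : ℚ) ^ n := by
  induction n using Int.induction_on with
  | zero => simp
  | succ k ih =>
    have h := U_add_two ℚ (2 * k)
    have e : (2 * ((k:ℤ) + 1)) = 2 * k + 2 := by ring
    rw [e, h]
    simp [ih, zpow_add_one₀ (by norm_num : (-1:ℚ) ≠ 0)]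
  | pred k ih =>
    have h := U_sub_two ℚ (2 * (-k))
    have e : (2 * (-(k:ℤ) - 1)) = 2 * (-k) - 2 := by ring
    rw [e, h]
    simp only [eval_sub, eval_mul, eval_X, eval_ofNat, mul_zero, zero_mul, zero_sub]
    rw [ih, zpow_sub_one₀ (by norm_num : (-1:ℚ) ≠ 0), zpow_neg]
    norm_num

/-- For every integer `p ≥ 1`, `U_{2p}(y)` and `y·T_{2p+1}(y)` are coprime in `ℚ[y]`. -/
theorem chebyshev_U_coprime_X_mul_T (p : ℤ) (hp : 1 ≤ p) :
    IsCoprime (U ℚ (2 * p)) ((X : ℚ[X]) * T ℚ (2 * p + 1)) := by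
  have hX : IsCoprime (U ℚ (2 * p)) (X : ℚ[X]) := by
    refine (Polynomial.prime_X.coprime_iff_not_dvd.mpr ?_).symm
    rw [Polynomial.X_dvd_iff, Polynomial.coeff_zero_eq_eval_zero,
      chebyshev_U_even_eval_zero]
    exact zpow_ne_zero _ (by norm_num)
  have hT : IsCoprime (U ℚ (2 * p)) (T ℚ (2 * p + 1)) := by
    refine ⟨(1 - X ^ 2) * U ℚ (2 * p), T ℚ (2 * p + 1), ?_⟩
    linear_combination chebyshev_pell (2 * p)
  exact hX.mul_right hT
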